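/- If n < m are integers, then the canonical-form integer game n is strictly greater than the game m modulo the closure of dead ends: for every sum X of dead ends, o^-(n + X) ≥ o^-(m + X), and the two games are not equivalent. -/

import Mathlib

universe u

namespace SetTheory

/-- The old Mathlib `SetTheory.PGame` (removed from Mathlib), with its old definitions. -/
inductive PGame : Type (u + 1)
  | mk : ∀ α β : Type u, (α → PGame) → (β → PGame) → PGame

namespace PGame

def LeftMoves : PGame → Type u
  | mk l _ _ _ => l

def RightMoves : PGame → Type u
  | mk _ r _ _ => r

def moveLeft : ∀ g : PGame, LeftMoves g → PGame
  | mk _l _ L _ => L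

def moveRight : ∀ g : PGame, RightMoves g → PGame
  | mk _ _r _ R => R

inductive IsOption : PGame → PGame → Prop
  | moveLeft {x : PGame} (i : x.LeftMoves) : IsOption (x.moveLeft i) x
  | moveRight {x : PGame} (i : x.RightMoves) : IsOption (x.moveRight i) x

instance : Zero PGame :=
  ⟨⟨PEmpty, PEmpty, PEmpty.elim, PEmpty.elim⟩⟩

def neg : PGame → PGame
  | ⟨l, r, L, R⟩ => ⟨r, l, fun i => neg (R i), fun i => neg (L i)⟩

instance : Neg PGame :=
  ⟨neg⟩

noncomputable instance : Add PGame.{u} :=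
  ⟨fun x y => by
    induction x generalizing y with | mk xl xr _ _ IHxl IHxr => _
    induction y with | mk yl yr yL yR IHyl IHyr => _
    have y := mk yl yr yL yR
    refine ⟨xl ⊕ yl, xr ⊕ yr, Sum.rec ?_ ?_, Sum.rec ?_ ?_⟩
    · exact fun i => IHxl i y
    · exact IHyl
    · exact fun i => IHxr i y
    · exact IHyr⟩

end PGame

end SetTheory

open SetTheory

namespace Misere

/-- `F` is a follower of `G`: reachable from `G` by a (possibly empty) sequence of moves. -/
def Follower (F G : PGame) : Prop := Relation.ReflTransGen PGame.IsOption F G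

def IsLeftEnd (G : PGame) : Prop := IsEmpty G.LeftMoves
def IsRightEnd (G : PGame) : Prop := IsEmpty G.RightMoves

/-- A dead left end: every follower (including itself) is a left end. -/
def DeadLeftEnd (G : PGame) : Prop := ∀ F, Follower F G → IsLeftEnd F
def DeadRightEnd (G : PGame) : Prop := ∀ F, Follower F G → IsRightEnd F
def DeadEnd (G : PGame) : Prop := DeadLeftEnd G ∨ DeadRightEnd G

/-- A game is dead-ending if every end follower is a dead end. -/
def DeadEnding (G : PGame) : Prop :=
  ∀ F, Follower F G → (IsLeftEnd F → DeadLeftEnd F) ∧ (IsRightEnd F → DeadRightEnd F)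

/-- The universe of dead-ending games. -/
def E : Set PGame := {G | DeadEnding G}

/-- `(misereWins G).1` : Left, moving first, wins `G` under misère play;
    `(misereWins G).2` : Right, moving first, wins `G` under misère play. -/
def misereWins : PGame → Prop × Prop
  | PGame.mk l r L R =>
      (IsEmpty l ∨ ∃ i, ¬ (misereWins (L i)).2,
       IsEmpty r ∨ ∃ j, ¬ (misereWins (R j)).1)

def LeftWinsGF (G : PGame) : Prop := (misereWins G).1
def RightWinsGF (G : PGame) : Prop := (misereWins G).2

inductive MOutcome : Type
  | L | N | P | R
deriving DecidableEq

/-- Partial order on misère outcomes: `R` minimal, `L` maximal, `N` and `P` incomparable. -/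
def MOutcome.le : MOutcome → MOutcome → Prop
  | .R, _ => True
  | _, .L => True
  | a, b => a = b

instance : LE MOutcome := ⟨MOutcome.le⟩

/-- The misère outcome of a game. -/
noncomputable def outcome (G : PGame) : MOutcome := by
  classical
  exact if LeftWinsGF G then (if RightWinsGF G then .N else .L)
        else (if RightWinsGF G then .R else .P)

/-- `G ≡ H (mod U)`. -/
def equivMod (U : Set PGame) (G H : PGame) : Prop :=
  ∀ X ∈ U, outcome (G + X) = outcome (H + X)

/-- `G ≧ H (mod U)`. -/
def geMod (U : Set PGame) (G H : PGame) : Prop :=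
  ∀ X ∈ U, outcome (H + X) ≤ outcome (G + X)

/-- `LeftChain G n`: there is a sequence of `n` consecutive Left moves from `G`
ending at the zero position. -/
inductive LeftChain : PGame → ℕ → Prop
  | zero (G : PGame) : IsLeftEnd G → IsRightEnd G → LeftChain G 0
  | succ (G : PGame) (i : G.LeftMoves) (n : ℕ) :
      LeftChain (G.moveLeft i) n → LeftChain G (n + 1)

inductive RightChain : PGame → ℕ → Prop
  | zero (G : PGame) : IsLeftEnd G → IsRightEnd G → RightChain G 0
  | succ (G : PGame) (j : G.RightMoves) (n : ℕ) :
      RightChain (G.moveRight j) n → RightChain G (n + 1)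

/-- Left-length: minimum number of consecutive Left moves needed to reach zero. -/
noncomputable def leftLength (G : PGame) : ℕ := sInf {n | LeftChain G n}

/-- Right-length: minimum number of consecutive Right moves needed to reach zero. -/
noncomputable def rightLength (G : PGame) : ℕ := sInf {n | RightChain G n}

/-- Normal-play canonical form of a nonnegative integer. -/
def natGame : ℕ → PGame
  | 0 => 0
  | n + 1 => PGame.mk PUnit PEmpty (fun _ => natGame n) PEmpty.elim

/-- Normal-play canonical form of an integer (negatives are conjugates). -/
def intGame (n : ℤ) : PGame :=
  if 0 ≤ n then natGame n.toNat else -natGame (-n).toNat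

/-- Normal-play canonical form of the dyadic rational `m / 2 ^ j`. -/
def dyadicGame : ℤ → ℕ → PGame
  | m, 0 => intGame m
  | m, j + 1 =>
      if m % 2 = 0 then dyadicGame (m / 2) j
      else PGame.mk PUnit PUnit (fun _ => dyadicGame ((m - 1) / 2) j)
            (fun _ => dyadicGame ((m + 1) / 2) j)

/-- The closure of dead ends: finite disjunctive sums of dead ends. -/
def DeadEndClosure : Set PGame :=
  {G | ∃ l : List PGame, (∀ x ∈ l, DeadEnd x) ∧ G = l.sum}

end Misere

open Misere SetTheory PGame

namespace SetTheory
namespace PGame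

noncomputable def moveRecOn {C : PGame → Sort*} (x : PGame)
    (IH : ∀ y : PGame, (∀ i, C (y.moveLeft i)) → (∀ j, C (y.moveRight j)) → C y) : C x :=
  PGame.rec (motive := C) (fun yl yr yL yR ihl ihr => IH (mk yl yr yL yR) ihl ihr) x

theorem leftMoves_add : ∀ x y : PGame.{u}, (x + y).LeftMoves = (x.LeftMoves ⊕ y.LeftMoves)
  | ⟨_, _, _, _⟩, ⟨_, _, _, _⟩ => rfl

theorem rightMoves_add : ∀ x y : PGame.{u}, (x + y).RightMoves = (x.RightMoves ⊕ y.RightMoves)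
  | ⟨_, _, _, _⟩, ⟨_, _, _, _⟩ => rfl

def toLeftMovesAdd {x y : PGame} : x.LeftMoves ⊕ y.LeftMoves ≃ (x + y).LeftMoves :=
  Equiv.cast (leftMoves_add x y).symm

def toRightMovesAdd {x y : PGame} : x.RightMoves ⊕ y.RightMoves ≃ (x + y).RightMoves :=
  Equiv.cast (rightMoves_add x y).symm

theorem add_moveLeft_inl {x : PGame} (y : PGame) (i) :
    (x + y).moveLeft (toLeftMovesAdd (Sum.inl i)) = x.moveLeft i + y := by
  cases x
  cases y
  rfl

theorem add_moveLeft_inr (x : PGame) {y : PGame} (i) :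
    (x + y).moveLeft (toLeftMovesAdd (Sum.inr i)) = x + y.moveLeft i := by
  cases x
  cases y
  rfl

theorem add_moveRight_inl {x : PGame} (y : PGame) (i) :
    (x + y).moveRight (toRightMovesAdd (Sum.inl i)) = x.moveRight i + y := by
  cases x
  cases y
  rfl

theorem add_moveRight_inr (x : PGame) {y : PGame} (i) :
    (x + y).moveRight (toRightMovesAdd (Sum.inr i)) = x + y.moveRight i := by
  cases x
  cases y
  rfl

theorem neg_neg_aux (x : PGame.{u}) : -(-x) = x := by
  induction x with
  | mk xl xr xL xR ihL ihR =>
    change mk xl xr (fun i => -(-(xL i))) (fun j => -(-(xR j))) = mk xl xr xL xR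
    simp only [ihL, ihR]

instance : InvolutiveNeg PGame.{u} :=
  { neg := Neg.neg
    neg_neg := neg_neg_aux }

theorem leftMoves_neg : ∀ x : PGame, (-x).LeftMoves = x.RightMoves
  | ⟨_, _, _, _⟩ => rfl

theorem rightMoves_neg : ∀ x : PGame, (-x).RightMoves = x.LeftMoves
  | ⟨_, _, _, _⟩ => rfl

def toLeftMovesNeg {x : PGame} : x.RightMoves ≃ (-x).LeftMoves :=
  Equiv.cast (leftMoves_neg x).symm

def toRightMovesNeg {x : PGame} : x.LeftMoves ≃ (-x).RightMoves :=
  Equiv.cast (rightMoves_neg x).symm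

theorem moveLeft_neg {x : PGame} (i) :
    (-x).moveLeft (toLeftMovesNeg i) = -x.moveRight i := by
  cases x
  rfl

theorem moveRight_neg {x : PGame} (i) :
    (-x).moveRight (toRightMovesNeg i) = -x.moveLeft i := by
  cases x
  rfl

theorem isOption_iff' {x y : PGame} :
    IsOption x y ↔ (∃ i, x = y.moveLeft i) ∨ (∃ j, x = y.moveRight j) := by
  constructor
  · intro h
    cases h with
    | moveLeft i => exact Or.inl ⟨i, rfl⟩
    | moveRight j => exact Or.inr ⟨j, rfl⟩
  · rintro (⟨i, rfl⟩ | ⟨j, rfl⟩)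
    · exact IsOption.moveLeft i
    · exact IsOption.moveRight j

theorem isOption_neg {x y : PGame} : IsOption x (-y) ↔ IsOption (-x) y := by
  rw [isOption_iff', isOption_iff']
  cases y with
  | mk yl yr yL yR =>
    change ((∃ i, x = -(yR i)) ∨ (∃ j, x = -(yL j))) ↔ ((∃ i, -x = yL i) ∨ (∃ j, -x = yR j))
    rw [or_comm]
    apply or_congr <;> apply exists_congr <;> intro i <;>
      exact ⟨fun h => by rw [h, neg_neg], fun h => by rw [← h, neg_neg]⟩

end PGame
end SetTheory


namespace Misere
open SetTheory PGame

/-! ### Chains to a one-sided end -/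

/-- Left chain ending at a position with no Left moves. -/
inductive LCh : PGame → ℕ → Prop
  | zero (G : PGame) : IsLeftEnd G → LCh G 0
  | succ (G : PGame) (i : G.LeftMoves) (n : ℕ) : LCh (G.moveLeft i) n → LCh G (n + 1)

/-- Right chain ending at a position with no Right moves. -/
inductive RCh : PGame → ℕ → Prop
  | zero (G : PGame) : IsRightEnd G → RCh G 0
  | succ (G : PGame) (j : G.RightMoves) (n : ℕ) : RCh (G.moveRight j) n → RCh G (n + 1)

noncomputable def LLen (G : PGame) : ℕ := sInf {n | LCh G n}
noncomputable def RLen (G : PGame) : ℕ := sInf {n | RCh G n}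

lemma LCh_exists (G : PGame) : ∃ n, LCh G n := by
  induction G using PGame.moveRecOn with
  | IH G ihl ihr =>
    by_cases h : IsLeftEnd G
    · exact ⟨0, .zero _ h⟩
    · rw [IsLeftEnd, not_isEmpty_iff] at h
      obtain ⟨i⟩ := h
      obtain ⟨n, hn⟩ := ihl i
      exact ⟨n + 1, .succ _ i _ hn⟩

lemma RCh_exists (G : PGame) : ∃ n, RCh G n := by
  induction G using PGame.moveRecOn with
  | IH G ihl ihr =>
    by_cases h : IsRightEnd G
    · exact ⟨0, .zero _ h⟩
    · rw [IsRightEnd, not_isEmpty_iff] at h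
      obtain ⟨j⟩ := h
      obtain ⟨n, hn⟩ := ihr j
      exact ⟨n + 1, .succ _ j _ hn⟩

lemma LLen_mem (G : PGame) : LCh G (LLen G) := Nat.sInf_mem (LCh_exists G)
lemma RLen_mem (G : PGame) : RCh G (RLen G) := Nat.sInf_mem (RCh_exists G)

lemma LLen_le {G : PGame} {n : ℕ} (h : LCh G n) : LLen G ≤ n := Nat.sInf_le h
lemma RLen_le {G : PGame} {n : ℕ} (h : RCh G n) : RLen G ≤ n := Nat.sInf_le h

lemma LLen_of_isLeftEnd {G : PGame} (h : IsLeftEnd G) : LLen G = 0 :=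
  Nat.le_zero.mp (LLen_le (.zero _ h))
lemma RLen_of_isRightEnd {G : PGame} (h : IsRightEnd G) : RLen G = 0 :=
  Nat.le_zero.mp (RLen_le (.zero _ h))

lemma isLeftEnd_of_LLen {G : PGame} (h : LLen G = 0) : IsLeftEnd G := by
  have hm := LLen_mem G
  rw [h] at hm
  cases hm with | zero _ h' => exact h'

lemma isRightEnd_of_RLen {G : PGame} (h : RLen G = 0) : IsRightEnd G := by
  have hm := RLen_mem G
  rw [h] at hm
  cases hm with | zero _ h' => exact h'

lemma isLeftEnd_zero : IsLeftEnd (0 : PGame) := inferInstanceAs (IsEmpty PEmpty)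
lemma isRightEnd_zero : IsRightEnd (0 : PGame) := inferInstanceAs (IsEmpty PEmpty)

/-! ### Additivity of chain lengths -/

lemma isLeftEnd_add_iff {x y : PGame} : IsLeftEnd (x + y) ↔ IsLeftEnd x ∧ IsLeftEnd y := by
  rw [IsLeftEnd, IsLeftEnd, IsLeftEnd, leftMoves_add]
  exact isEmpty_sum

lemma isRightEnd_add_iff {x y : PGame} : IsRightEnd (x + y) ↔ IsRightEnd x ∧ IsRightEnd y := by
  rw [IsRightEnd, IsRightEnd, IsRightEnd, rightMoves_add]
  exact isEmpty_sum

lemma LCh_add : ∀ {a p}, LCh a p → ∀ {b q}, LCh b q → LCh (a + b) (p + q) := by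
  intro a p ha
  induction ha with
  | zero G hG =>
    intro b q hb
    induction hb with
    | zero H hH => exact .zero _ (isLeftEnd_add_iff.mpr ⟨hG, hH⟩)
    | succ H j m hm ih =>
      exact .succ _ (toLeftMovesAdd (Sum.inr j)) _ (by rw [add_moveLeft_inr]; exact ih)
  | succ G i n hn ih =>
    intro b q hb
    have h1 : LCh (G.moveLeft i + b) (n + q) := ih hb
    have h2 : LCh (G + b) ((n + q) + 1) :=
      .succ _ (toLeftMovesAdd (Sum.inl i)) _ (by rw [add_moveLeft_inl]; exact h1)
    have h3 : n + 1 + q = (n + q) + 1 := by omega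
    rw [h3]
    exact h2

lemma RCh_add : ∀ {a p}, RCh a p → ∀ {b q}, RCh b q → RCh (a + b) (p + q) := by
  intro a p ha
  induction ha with
  | zero G hG =>
    intro b q hb
    induction hb with
    | zero H hH => exact .zero _ (isRightEnd_add_iff.mpr ⟨hG, hH⟩)
    | succ H j m hm ih =>
      exact .succ _ (toRightMovesAdd (Sum.inr j)) _ (by rw [add_moveRight_inr]; exact ih)
  | succ G i n hn ih =>
    intro b q hb
    have h1 : RCh (G.moveRight i + b) (n + q) := ih hb
    have h2 : RCh (G + b) ((n + q) + 1) :=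
      .succ _ (toRightMovesAdd (Sum.inl i)) _ (by rw [add_moveRight_inl]; exact h1)
    have h3 : n + 1 + q = (n + q) + 1 := by omega
    rw [h3]
    exact h2

lemma LCh_add_inv : ∀ {n : ℕ} {a b : PGame}, LCh (a + b) n →
    ∃ p q, p + q = n ∧ LCh a p ∧ LCh b q := by
  intro n
  induction n with
  | zero =>
    intro a b h
    cases h with
    | zero _ hG =>
      exact ⟨0, 0, rfl, .zero _ (isLeftEnd_add_iff.mp hG).1, .zero _ (isLeftEnd_add_iff.mp hG).2⟩
  | succ n ih =>
    intro a b h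
    cases h with
    | succ _ i _ hn =>
      rw [← toLeftMovesAdd.apply_symm_apply i] at hn
      rcases e : toLeftMovesAdd.symm i with i' | j' <;> rw [e] at hn
      · rw [add_moveLeft_inl] at hn
        obtain ⟨p, q, hpq, hp, hq⟩ := ih hn
        exact ⟨p + 1, q, by omega, .succ _ i' _ hp, hq⟩
      · rw [add_moveLeft_inr] at hn
        obtain ⟨p, q, hpq, hp, hq⟩ := ih hn
        exact ⟨p, q + 1, by omega, hp, .succ _ j' _ hq⟩

lemma RCh_add_inv : ∀ {n : ℕ} {a b : PGame}, RCh (a + b) n →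
    ∃ p q, p + q = n ∧ RCh a p ∧ RCh b q := by
  intro n
  induction n with
  | zero =>
    intro a b h
    cases h with
    | zero _ hG =>
      exact ⟨0, 0, rfl, .zero _ (isRightEnd_add_iff.mp hG).1, .zero _ (isRightEnd_add_iff.mp hG).2⟩
  | succ n ih =>
    intro a b h
    cases h with
    | succ _ i _ hn =>
      rw [← toRightMovesAdd.apply_symm_apply i] at hn
      rcases e : toRightMovesAdd.symm i with i' | j' <;> rw [e] at hn
      · rw [add_moveRight_inl] at hn
        obtain ⟨p, q, hpq, hp, hq⟩ := ih hn
        exact ⟨p + 1, q, by omega, .succ _ i' _ hp, hq⟩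
      · rw [add_moveRight_inr] at hn
        obtain ⟨p, q, hpq, hp, hq⟩ := ih hn
        exact ⟨p, q + 1, by omega, hp, .succ _ j' _ hq⟩

lemma LLen_add (a b : PGame) : LLen (a + b) = LLen a + LLen b := by
  apply le_antisymm
  · exact LLen_le (LCh_add (LLen_mem a) (LLen_mem b))
  · obtain ⟨p, q, hpq, hp, hq⟩ := LCh_add_inv (LLen_mem (a + b))
    calc LLen a + LLen b ≤ p + q := Nat.add_le_add (LLen_le hp) (LLen_le hq)
      _ = LLen (a + b) := hpq

lemma RLen_add (a b : PGame) : RLen (a + b) = RLen a + RLen b := by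
  apply le_antisymm
  · exact RLen_le (RCh_add (RLen_mem a) (RLen_mem b))
  · obtain ⟨p, q, hpq, hp, hq⟩ := RCh_add_inv (RLen_mem (a + b))
    calc RLen a + RLen b ≤ p + q := Nat.add_le_add (RLen_le hp) (RLen_le hq)
      _ = RLen (a + b) := hpq

/-! ### Unfolding misère wins -/

lemma leftWinsGF_iff (G : PGame) :
    LeftWinsGF G ↔ IsLeftEnd G ∨ ∃ i, ¬ RightWinsGF (G.moveLeft i) := by
  cases G with
  | mk l r L R =>
    rw [LeftWinsGF, misereWins]
    exact Iff.rfl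

lemma rightWinsGF_iff (G : PGame) :
    RightWinsGF G ↔ IsRightEnd G ∨ ∃ j, ¬ LeftWinsGF (G.moveRight j) := by
  cases G with
  | mk l r L R =>
    rw [RightWinsGF, misereWins]
    exact Iff.rfl

/-! ### Dead ends -/

lemma DeadLeftEnd.isLeftEnd {G : PGame} (h : DeadLeftEnd G) : IsLeftEnd G :=
  h G Relation.ReflTransGen.refl

lemma DeadRightEnd.isRightEnd {G : PGame} (h : DeadRightEnd G) : IsRightEnd G :=
  h G Relation.ReflTransGen.refl

lemma DeadRightEnd.moveLeft {G : PGame} (h : DeadRightEnd G) (i : G.LeftMoves) :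
    DeadRightEnd (G.moveLeft i) :=
  fun F hF => h F (hF.tail (PGame.IsOption.moveLeft i))

lemma DeadLeftEnd.moveRight {G : PGame} (h : DeadLeftEnd G) (j : G.RightMoves) :
    DeadLeftEnd (G.moveRight j) :=
  fun F hF => h F (hF.tail (PGame.IsOption.moveRight j))

/-! ### Moving inside a sum of dead ends -/

lemma sum_moveLeft_aux : ∀ (l : List PGame), (∀ x ∈ l, DeadEnd x) →
    ∀ i : (l.sum : PGame).LeftMoves,
      ((l.sum).moveLeft i ∈ DeadEndClosure) ∧ RLen ((l.sum).moveLeft i) = RLen l.sum := by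
  intro l
  induction l with
  | nil =>
    intro _ i
    exact (isLeftEnd_zero.false i).elim
  | cons x t ih =>
    intro h
    have hx := h x List.mem_cons_self
    have ht : ∀ y ∈ t, DeadEnd y := fun y hy => h y (List.mem_cons_of_mem _ hy)
    rw [List.sum_cons]
    intro i
    rw [← toLeftMovesAdd.apply_symm_apply i]
    rcases toLeftMovesAdd.symm i with i' | j'
    · rw [add_moveLeft_inl]
      have hxR : DeadRightEnd x := by
        rcases hx with h1 | h2
        · exact (h1.isLeftEnd.false i').elim
        · exact h2
      have hx' : DeadRightEnd (x.moveLeft i') := hxR.moveLeft i'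
      refine ⟨⟨x.moveLeft i' :: t, ?_, by rw [List.sum_cons]⟩, ?_⟩
      · intro y hy
        rcases List.mem_cons.mp hy with rfl | hy'
        · exact Or.inr hx'
        · exact ht y hy'
      · rw [RLen_add, RLen_add, RLen_of_isRightEnd hx'.isRightEnd,
          RLen_of_isRightEnd hxR.isRightEnd]
    · rw [add_moveLeft_inr]
      obtain ⟨hmem, hRL⟩ := ih ht j'
      refine ⟨?_, ?_⟩
      · obtain ⟨l', hl', hsum⟩ := hmem
        exact ⟨x :: l', by
          intro y hy
          rcases List.mem_cons.mp hy with rfl | hy'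
          · exact hx
          · exact hl' y hy', by rw [List.sum_cons, ← hsum]⟩
      · rw [RLen_add, RLen_add, hRL]

lemma sum_moveRight_aux : ∀ (l : List PGame), (∀ x ∈ l, DeadEnd x) →
    ∀ j : (l.sum : PGame).RightMoves,
      ((l.sum).moveRight j ∈ DeadEndClosure) ∧ LLen ((l.sum).moveRight j) = LLen l.sum := by
  intro l
  induction l with
  | nil =>
    intro _ j
    exact (isRightEnd_zero.false j).elim
  | cons x t ih =>
    intro h
    have hx := h x List.mem_cons_self
    have ht : ∀ y ∈ t, DeadEnd y := fun y hy => h y (List.mem_cons_of_mem _ hy)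
    rw [List.sum_cons]
    intro j
    rw [← toRightMovesAdd.apply_symm_apply j]
    rcases toRightMovesAdd.symm j with i' | j'
    · rw [add_moveRight_inl]
      have hxL : DeadLeftEnd x := by
        rcases hx with h1 | h2
        · exact h1
        · exact (h2.isRightEnd.false i').elim
      have hx' : DeadLeftEnd (x.moveRight i') := hxL.moveRight i'
      refine ⟨⟨x.moveRight i' :: t, ?_, by rw [List.sum_cons]⟩, ?_⟩
      · intro y hy
        rcases List.mem_cons.mp hy with rfl | hy'
        · exact Or.inl hx'
        · exact ht y hy'
      · rw [LLen_add, LLen_add, LLen_of_isLeftEnd hx'.isLeftEnd,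
          LLen_of_isLeftEnd hxL.isLeftEnd]
    · rw [add_moveRight_inr]
      obtain ⟨hmem, hLL⟩ := ih ht j'
      refine ⟨?_, ?_⟩
      · obtain ⟨l', hl', hsum⟩ := hmem
        exact ⟨x :: l', by
          intro y hy
          rcases List.mem_cons.mp hy with rfl | hy'
          · exact hx
          · exact hl' y hy', by rw [List.sum_cons, ← hsum]⟩
      · rw [LLen_add, LLen_add, hLL]

lemma closure_moveLeft {X : PGame} (hX : X ∈ DeadEndClosure) (i : X.LeftMoves) :
    X.moveLeft i ∈ DeadEndClosure ∧ RLen (X.moveLeft i) = RLen X := by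
  obtain ⟨l, hl, rfl⟩ := hX
  exact sum_moveLeft_aux l hl i

lemma closure_moveRight {X : PGame} (hX : X ∈ DeadEndClosure) (j : X.RightMoves) :
    X.moveRight j ∈ DeadEndClosure ∧ LLen (X.moveRight j) = LLen X := by
  obtain ⟨l, hl, rfl⟩ := hX
  exact sum_moveRight_aux l hl j

/-! ### Main outcome characterisation for sums of dead ends -/

theorem main_char : ∀ X : PGame, X ∈ DeadEndClosure →
    (LeftWinsGF X ↔ LLen X ≤ RLen X) ∧ (RightWinsGF X ↔ RLen X ≤ LLen X) := by
  intro X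
  induction X using PGame.moveRecOn with
  | IH X ihl ihr =>
    intro hX
    constructor
    · constructor
      · intro hw
        by_contra hlt
        push_neg at hlt
        rw [leftWinsGF_iff] at hw
        rcases hw with hend | ⟨i, hi⟩
        · have h0 : LLen X = 0 := LLen_of_isLeftEnd hend
          omega
        · apply hi
          have h1 := closure_moveLeft hX i
          rw [(ihl i h1.1).2, h1.2]
          have h2 : LLen X ≤ LLen (X.moveLeft i) + 1 :=
            LLen_le (.succ _ i _ (LLen_mem _))
          omega
      · intro hle
        rw [leftWinsGF_iff]
        by_cases hend : IsLeftEnd X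
        · exact Or.inl hend
        · have hpos : LLen X ≠ 0 := fun h0 => hend (isLeftEnd_of_LLen h0)
          obtain ⟨k, hk⟩ : ∃ k, LLen X = k + 1 := ⟨LLen X - 1, by omega⟩
          have hmem := LLen_mem X
          rw [hk] at hmem
          cases hmem with
          | succ _ i _ hchain =>
            refine Or.inr ⟨i, ?_⟩
            have h1 := closure_moveLeft hX i
            rw [(ihl i h1.1).2, h1.2]
            have h2 : LLen (X.moveLeft i) ≤ k := LLen_le hchain
            omega
    · constructor
      · intro hw
        by_contra hlt
        push_neg at hlt
        rw [rightWinsGF_iff] at hw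
        rcases hw with hend | ⟨j, hj⟩
        · have h0 : RLen X = 0 := RLen_of_isRightEnd hend
          omega
        · apply hj
          have h1 := closure_moveRight hX j
          rw [(ihr j h1.1).1, h1.2]
          have h2 : RLen X ≤ RLen (X.moveRight j) + 1 :=
            RLen_le (.succ _ j _ (RLen_mem _))
          omega
      · intro hle
        rw [rightWinsGF_iff]
        by_cases hend : IsRightEnd X
        · exact Or.inl hend
        · have hpos : RLen X ≠ 0 := fun h0 => hend (isRightEnd_of_RLen h0)
          obtain ⟨k, hk⟩ : ∃ k, RLen X = k + 1 := ⟨RLen X - 1, by omega⟩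
          have hmem := RLen_mem X
          rw [hk] at hmem
          cases hmem with
          | succ _ j _ hchain =>
            refine Or.inr ⟨j, ?_⟩
            have h1 := closure_moveRight hX j
            rw [(ihr j h1.1).1, h1.2]
            have h2 : RLen (X.moveRight j) ≤ k := RLen_le hchain
            omega

/-! ### Integer games -/

lemma deadRightEnd_natGame : ∀ k, DeadRightEnd (natGame k) := by
  intro k
  induction k with
  | zero =>
    intro F hF
    cases hF with
    | refl => exact isRightEnd_zero
    | tail h hstep =>
      cases hstep with
      | moveLeft i => exact (isLeftEnd_zero.false i).elim
      | moveRight j => exact (isRightEnd_zero.false j).elim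
  | succ k ih =>
    intro F hF
    cases hF with
    | refl => exact inferInstanceAs (IsEmpty PEmpty)
    | tail h hstep =>
      cases hstep with
      | moveLeft i => exact ih F h
      | moveRight j => exact (j : PEmpty).elim

lemma follower_neg : ∀ {F x : PGame}, Follower F (-x) → Follower (-F) x := by
  intro F x h
  induction h using Relation.ReflTransGen.head_induction_on with
  | refl =>
    rw [neg_neg]
    exact Relation.ReflTransGen.refl
  | head hstep htail ih =>
    rename_i a c
    have hop : PGame.IsOption (-a) (-c) := by
      rw [isOption_neg, neg_neg]
      exact hstep
    exact Relation.ReflTransGen.head hop ih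

lemma deadLeftEnd_neg {x : PGame} (h : DeadRightEnd x) : DeadLeftEnd (-x) := by
  intro F hF
  have h1 := h (-F) (follower_neg hF)
  rw [IsLeftEnd, ← rightMoves_neg]
  exact h1

lemma deadEnd_intGame (n : ℤ) : DeadEnd (intGame n) := by
  unfold intGame
  split
  · exact Or.inr (deadRightEnd_natGame _)
  · exact Or.inl (deadLeftEnd_neg (deadRightEnd_natGame _))

lemma LCh_natGame : ∀ k n, LCh (natGame k) n ↔ n = k := by
  intro k
  induction k with
  | zero =>
    intro n
    constructor
    · intro h
      cases h with
      | zero _ _ => rfl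
      | succ _ i _ _ => exact (isLeftEnd_zero.false i).elim
    · rintro rfl
      exact .zero _ isLeftEnd_zero
  | succ k ih =>
    intro n
    constructor
    · intro h
      cases h with
      | zero _ hend => exact (hend.false PUnit.unit).elim
      | succ _ i m hm => rw [(ih m).mp hm]
    · rintro rfl
      exact .succ (natGame (k + 1)) PUnit.unit _ ((ih k).mpr rfl)

lemma LLen_natGame (k : ℕ) : LLen (natGame k) = k :=
  (LCh_natGame k _).mp (LLen_mem _)

lemma RLen_natGame (k : ℕ) : RLen (natGame k) = 0 :=
  RLen_of_isRightEnd (deadRightEnd_natGame k).isRightEnd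

lemma RCh_neg : ∀ {x n}, LCh x n → RCh (-x) n := by
  intro x n h
  induction h with
  | zero G hG =>
    refine .zero _ ?_
    rw [IsRightEnd, rightMoves_neg]
    exact hG
  | succ G i m hm ih =>
    exact .succ _ (toRightMovesNeg i) _ (by rw [moveRight_neg]; exact ih)

lemma LCh_neg : ∀ {x n}, RCh x n → LCh (-x) n := by
  intro x n h
  induction h with
  | zero G hG =>
    refine .zero _ ?_
    rw [IsLeftEnd, leftMoves_neg]
    exact hG
  | succ G j m hm ih =>
    exact .succ _ (toLeftMovesNeg j) _ (by rw [moveLeft_neg]; exact ih)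

lemma RLen_neg (x : PGame) : RLen (-x) = LLen x := by
  apply le_antisymm
  · exact RLen_le (RCh_neg (LLen_mem x))
  · have h := LCh_neg (RLen_mem (-x))
    rw [neg_neg] at h
    exact LLen_le h

lemma LLen_neg (x : PGame) : LLen (-x) = RLen x := by
  apply le_antisymm
  · exact LLen_le (LCh_neg (RLen_mem x))
  · have h := RCh_neg (LLen_mem (-x))
    rw [neg_neg] at h
    exact RLen_le h

lemma LLen_intGame (n : ℤ) : LLen (intGame n) = n.toNat := by
  unfold intGame
  split
  · exact LLen_natGame _
  · rw [LLen_neg, RLen_natGame]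
    omega

lemma RLen_intGame (n : ℤ) : RLen (intGame n) = (-n).toNat := by
  unfold intGame
  split
  · rw [RLen_natGame]
    omega
  · rw [RLen_neg, LLen_natGame]

/-! ### Outcomes -/

lemma outcome_eq_L {G : PGame} (h1 : LeftWinsGF G) (h2 : ¬ RightWinsGF G) :
    outcome G = .L := by
  unfold outcome
  rw [if_pos h1, if_neg h2]

lemma outcome_eq_N {G : PGame} (h1 : LeftWinsGF G) (h2 : RightWinsGF G) :
    outcome G = .N := by
  unfold outcome
  rw [if_pos h1, if_pos h2]

lemma outcome_eq_R {G : PGame} (h1 : ¬ LeftWinsGF G) (h2 : RightWinsGF G) :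
    outcome G = .R := by
  unfold outcome
  rw [if_neg h1, if_pos h2]

lemma MOutcome.R_le (o : MOutcome) : MOutcome.R ≤ o := by
  show MOutcome.le _ _
  cases o <;> trivial

lemma MOutcome.le_L (o : MOutcome) : o ≤ MOutcome.L := by
  show MOutcome.le _ _
  cases o <;> trivial

lemma intGame_add_mem {k : ℤ} {X : PGame} (hX : X ∈ DeadEndClosure) :
    intGame k + X ∈ DeadEndClosure := by
  obtain ⟨l, hl, rfl⟩ := hX
  refine ⟨intGame k :: l, ?_, by rw [List.sum_cons]⟩
  intro y hy
  rcases List.mem_cons.mp hy with rfl | hy'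
  · exact deadEnd_intGame k
  · exact hl y hy'

end Misere

/-- integers are totally ordered modulo the closure of dead ends:
if n < m then game n is strictly greater than game m. -/
theorem stmt7 (n m : ℤ) (h : n < m) :
    geMod DeadEndClosure (intGame n) (intGame m) ∧
    ¬ equivMod DeadEndClosure (intGame n) (intGame m) := by
  constructor
  · intro X hX
    have hmem_n := intGame_add_mem (k := n) hX
    have hmem_m := intGame_add_mem (k := m) hX
    have hn := main_char _ hmem_n
    have hm := main_char _ hmem_m
    rw [LLen_add, RLen_add, LLen_intGame, RLen_intGame] at hn hm
    by_cases hc : m.toNat + LLen X ≤ (-m).toNat + RLen X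
    · have h1 : n.toNat + LLen X ≤ (-n).toNat + RLen X := by omega
      have h2 : ¬ ((-n).toNat + RLen X ≤ n.toNat + LLen X) := by omega
      rw [outcome_eq_L (hn.1.mpr h1) (fun hw => h2 (hn.2.mp hw))]
      exact MOutcome.le_L _
    · have h1 : (-m).toNat + RLen X ≤ m.toNat + LLen X := by omega
      rw [outcome_eq_R (fun hw => hc (hm.1.mp hw)) (hm.2.mpr h1)]
      exact MOutcome.R_le _
  · intro hequiv
    have hXmem : ([intGame (-m)].sum : PGame) ∈ DeadEndClosure :=
      ⟨[intGame (-m)], by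
        intro y hy
        rw [List.mem_singleton] at hy
        subst hy
        exact deadEnd_intGame _, rfl⟩
    have heq := hequiv _ hXmem
    have hmem_n := intGame_add_mem (k := n) hXmem
    have hmem_m := intGame_add_mem (k := m) hXmem
    have hn := main_char _ hmem_n
    have hm := main_char _ hmem_m
    have hsum : ([intGame (-m)].sum : PGame) = intGame (-m) + 0 := by
      rw [List.sum_cons, List.sum_nil]
    rw [hsum] at hn hm heq
    simp only [LLen_add, RLen_add, LLen_intGame, RLen_intGame,
      LLen_of_isLeftEnd isLeftEnd_zero, RLen_of_isRightEnd isRightEnd_zero] at hn hm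
    have hL : outcome (intGame n + (intGame (-m) + 0)) = .L := by
      apply outcome_eq_L
      · exact hn.1.mpr (by omega)
      · intro hw
        have := hn.2.mp hw
        omega
    have hN : outcome (intGame m + (intGame (-m) + 0)) = .N := by
      apply outcome_eq_N
      · exact hm.1.mpr (by omega)
      · exact hm.2.mpr (by omega)
    rw [hL, hN] at heq
    exact MOutcome.noConfusion heq
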